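/- Let p ∈ (0,1), let A be a measurable event with probability 1 − p on a probability space, and let X be a random variable with cumulative distribution function F. Then the conditional distribution H_{X|A} of X given A satisfies H_{X|A} ≤_ss F^{[p,1]}, i.e., the conditional distribution of X given any event of probability 1 − p is smaller in strong stochastic order than the upper p-tail distribution of F. -/
import Mathlib


open MeasureTheory Set Filter

noncomputable section

variable {Ω : Type*} [MeasurableSpace Ω]

/-- A cumulative distribution function on `ℝ`. -/
structure IsCDF (F : ℝ → ℝ) : Prop where
  mono : Monotone F
  right_cont : ∀ x, ContinuousWithinAt F (Set.Ici x) x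
  tendsto_atBot : Filter.Tendsto F Filter.atBot (nhds 0)
  tendsto_atTop : Filter.Tendsto F Filter.atTop (nhds 1)

/-- The probability space is atomless. -/
def Atomless (μ : Measure Ω) : Prop :=
  ∀ s : Set Ω, MeasurableSet s → 0 < μ s →
    ∃ t : Set Ω, MeasurableSet t ∧ t ⊆ s ∧ 0 < μ t ∧ μ t < μ s

/-- The distribution function of a random variable. -/
def distFun (μ : Measure Ω) (X : Ω → ℝ) : ℝ → ℝ :=
  fun x => (μ {ω | X ω ≤ x}).toReal

/-- `X` is a random variable distributed according to `F`. -/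
def HasCDF (μ : Measure Ω) (X : Ω → ℝ) (F : ℝ → ℝ) : Prop :=
  Measurable X ∧ ∀ x, distFun μ X x = F x

/-- Stochastic order `F ≤_st G`, i.e. `G(x) ≤ F(x)` for all `x`. -/
def StOrder (F G : ℝ → ℝ) : Prop := ∀ x, G x ≤ F x

/-- The ordered-coupling set `F^o_2(F,G)`: `X ~ F`, `Y ~ G`, `X ≤ Y` a.s. -/
def OrderedCoupling (μ : Measure Ω) (F G : ℝ → ℝ) (X Y : Ω → ℝ) : Prop :=
  HasCDF μ X F ∧ HasCDF μ Y G ∧ ∀ᵐ ω ∂μ, X ω ≤ Y ω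

/-- The directional lower (DL) coupling distribution function `D_*^{F,G}`. -/
def DLdf (F G : ℝ → ℝ) (x y : ℝ) : ℝ :=
  if y ≤ x then G y else F x - sInf ((fun z => F z - G z) '' Set.Icc x y)

/-- `(X,Y)` is DL-coupled: its joint distribution function is `D_*^{F,G}`. -/
def IsDLCoupled (μ : Measure Ω) (F G : ℝ → ℝ) (X Y : Ω → ℝ) : Prop :=
  ∀ x y : ℝ, (μ {ω | X ω ≤ x ∧ Y ω ≤ y}).toReal = DLdf F G x y

/-- The essential infimum of a distribution, `G^{-1}(0) = inf {t | G t > 0}`,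
as an extended real (possibly `⊥`). -/
def leftEnd (F : ℝ → ℝ) : EReal :=
  sInf ((fun t : ℝ => (t : EReal)) '' {t : ℝ | 0 < F t})

/-- Strong stochastic order `F ≤_ss G`:
`G(y) − G(x) ≥ F(y) − F(x)` for all `y ≥ x ≥ G^{-1}(0)`. -/
def SSOrder (F G : ℝ → ℝ) : Prop :=
  ∀ x y : ℝ, leftEnd G ≤ (x : EReal) → x ≤ y → F y - F x ≤ G y - G x

/-- The upper `p`-tail distribution `F^{[p,1]}(x) = (F(x) − p)_+ / (1 − p)`. -/
def upperTail (F : ℝ → ℝ) (p : ℝ) : ℝ → ℝ :=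
  fun x => max (F x - p) 0 / (1 - p)

/-- The conditional distribution function of `X` given the event `A`. -/
def condCDF' (μ : Measure Ω) (X : Ω → ℝ) (A : Set Ω) : ℝ → ℝ :=
  fun x => (μ (A ∩ {ω | X ω ≤ x}) / μ A).toReal

/-- The conditional distribution of `X` given any event of probability `1 − p`
is smaller in strong stochastic order than the upper `p`-tail distribution. -/
theorem condCDF_ssOrder_upperTail
    (μ : Measure Ω) [IsProbabilityMeasure μ]
    (p : ℝ) (hp : p ∈ Set.Ioo (0 : ℝ) 1)
    (A : Set Ω) (hA : MeasurableSet A) (hAp : μ A = ENNReal.ofReal (1 - p))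
    (X : Ω → ℝ) (F : ℝ → ℝ) (hX : HasCDF μ X F) :
    SSOrder (condCDF' μ X A) (upperTail F p) := by
  obtain ⟨hp0, hp1⟩ := hp
  have h1p : (0:ℝ) < 1 - p := by linarith
  obtain ⟨hXm, hXF⟩ := hX
  have hmx : ∀ t : ℝ, MeasurableSet {ω | X ω ≤ t} := fun t => hXm measurableSet_Iic
  have hFmeas : ∀ t : ℝ, F t = (μ {ω | X ω ≤ t}).toReal := fun t => (hXF t).symm
  have hFmono : Monotone F := by
    intro a b hab
    rw [hFmeas, hFmeas]
    exact ENNReal.toReal_mono (measure_ne_top _ _)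
      (measure_mono fun ω h => le_trans h hab)
  intro x y hle hxy
  -- Step 1: F x ≥ p.
  have key : ∀ ε > (0:ℝ), p < F (x + ε) := by
    intro ε hε
    have hlt : leftEnd (upperTail F p) < ((x + ε : ℝ) : EReal) := by
      refine lt_of_le_of_lt hle ?_
      exact_mod_cast (by linarith : x < x + ε)
    rw [leftEnd] at hlt
    obtain ⟨a, ha, hax⟩ := sInf_lt_iff.mp hlt
    obtain ⟨t, ht, rfl⟩ := ha
    have hax' : (t : EReal) < ((x + ε : ℝ) : EReal) := hax
    have htx : t ≤ x + ε := le_of_lt (by exact_mod_cast hax')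
    have hFt : p < F t := by
      by_contra h
      push_neg at h
      simp only [upperTail, Set.mem_setOf_eq] at ht
      rw [max_eq_right (by linarith : F t - p ≤ 0)] at ht
      simp at ht
    exact lt_of_lt_of_le hFt (hFmono htx)
  have hFx : p ≤ F x := by
    set s : ℕ → Set Ω := fun n => {ω | X ω ≤ x + 1 / (n + 1)} with hs
    have hanti : Antitone s := by
      intro n m hnm ω hω
      simp only [hs, Set.mem_setOf_eq] at hω ⊢
      have : (1:ℝ) / (m + 1) ≤ 1 / (n + 1) := by
        apply one_div_le_one_div_of_le
        · positivity
        · exact_mod_cast by omega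
      linarith
    have hiInter : ⋂ n, s n = {ω | X ω ≤ x} := by
      ext ω
      simp only [Set.mem_iInter, hs, Set.mem_setOf_eq]
      constructor
      · intro h
        refine le_of_forall_pos_le_add fun ε hε => ?_
        obtain ⟨n, hn⟩ := exists_nat_one_div_lt hε
        exact le_trans (h n) (by linarith [hn])
      · intro h n
        have : (0:ℝ) < 1 / (n + 1) := by positivity
        linarith
    have htend : Tendsto (μ ∘ s) atTop (nhds (μ {ω | X ω ≤ x})) := by
      rw [← hiInter]
      exact tendsto_measure_iInter_atTop (fun n => (hmx _).nullMeasurableSet)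
        hanti ⟨0, measure_ne_top _ _⟩
    have hbound : ∀ n : ℕ, ENNReal.ofReal p ≤ (μ ∘ s) n := by
      intro n
      apply ENNReal.ofReal_le_of_le_toReal
      show p ≤ (μ (s n)).toReal
      simp only [hs]
      rw [← hFmeas]
      exact (key (1 / (n + 1)) (by positivity)).le
    have : ENNReal.ofReal p ≤ μ {ω | X ω ≤ x} := ge_of_tendsto' htend hbound
    calc p = (ENNReal.ofReal p).toReal := by rw [ENNReal.toReal_ofReal hp0.le]
      _ ≤ (μ {ω | X ω ≤ x}).toReal := ENNReal.toReal_mono (measure_ne_top _ _) this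
      _ = F x := hXF x
  have hFy : p ≤ F y := le_trans hFx (hFmono hxy)
  -- Step 2: the main inequality.
  have hmuA : (μ A).toReal = 1 - p := by rw [hAp, ENNReal.toReal_ofReal h1p.le]
  have hcond : ∀ t, condCDF' μ X A t = (μ (A ∩ {ω | X ω ≤ t})).toReal / (1 - p) := by
    intro t
    rw [condCDF', ENNReal.toReal_div, hmuA]
  have hsub : {ω | X ω ≤ x} ⊆ {ω | X ω ≤ y} := fun ω h => le_trans h hxy
  have e1 : μ (A ∩ {ω | X ω ≤ y})
      = μ (A ∩ {ω | X ω ≤ x}) + μ ((A ∩ {ω | X ω ≤ y}) \ {ω | X ω ≤ x}) := by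
    rw [← measure_inter_add_diff (A ∩ {ω | X ω ≤ y}) (hmx x), Set.inter_assoc,
      Set.inter_eq_right.mpr hsub]
  have e2 : μ {ω | X ω ≤ y}
      = μ {ω | X ω ≤ x} + μ ({ω | X ω ≤ y} \ {ω | X ω ≤ x}) := by
    rw [← measure_inter_add_diff {ω | X ω ≤ y} (hmx x), Set.inter_eq_right.mpr hsub]
  have hd : μ ((A ∩ {ω | X ω ≤ y}) \ {ω | X ω ≤ x})
      ≤ μ ({ω | X ω ≤ y} \ {ω | X ω ≤ x}) :=
    measure_mono (Set.diff_subset_diff_left Set.inter_subset_right)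
  have e1' : (μ (A ∩ {ω | X ω ≤ y})).toReal
      = (μ (A ∩ {ω | X ω ≤ x})).toReal + (μ ((A ∩ {ω | X ω ≤ y}) \ {ω | X ω ≤ x})).toReal := by
    rw [e1, ENNReal.toReal_add (measure_ne_top _ _) (measure_ne_top _ _)]
  have e2' : F y = F x + (μ ({ω | X ω ≤ y} \ {ω | X ω ≤ x})).toReal := by
    rw [hFmeas y, hFmeas x, e2, ENNReal.toReal_add (measure_ne_top _ _) (measure_ne_top _ _)]
  have hd' : (μ ((A ∩ {ω | X ω ≤ y}) \ {ω | X ω ≤ x})).toReal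
      ≤ (μ ({ω | X ω ≤ y} \ {ω | X ω ≤ x})).toReal :=
    ENNReal.toReal_mono (measure_ne_top _ _) hd
  have hut : ∀ t, p ≤ F t → upperTail F p t = (F t - p) / (1 - p) := by
    intro t ht
    rw [upperTail, max_eq_left (by linarith : (0:ℝ) ≤ F t - p)]
  rw [hcond, hcond, hut x hFx, hut y hFy, div_sub_div_same, div_sub_div_same]
  apply div_le_div_of_nonneg_right ?_ h1p.le
  linarith
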